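/- Let φ : ℕ → [1, ∞) be nondecreasing with limsup_n log(n+2)/φ(n) = ∞. Then there exist functions g_k with ‖g_k‖_{H_1} ≤ 1 and indices q_k such that ∫_G |S_{q_k} g_k| / φ(q_k) dμ → ∞; i.e., the weight log(n+2) in the maximal operator sup_n |S_n f|/log(n+2) on H_1(G) is sharp. -/

import Mathlib

open MeasureTheory ENNReal Filter
open scoped Classical

noncomputable section

instance : TopologicalSpace (ZMod 2) := ⊥
instance : DiscreteTopology (ZMod 2) := ⟨rfl⟩
instance : MeasurableSpace (ZMod 2) := ⊤
instance : BorelSpace (ZMod 2) := ⟨borel_eq_top_of_discrete.symm⟩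
instance : IsTopologicalAddGroup (ZMod 2) where
  continuous_add := continuous_of_discreteTopology
  continuous_neg := continuous_of_discreteTopology

/-- The dyadic group `G = (ℤ/2)^ℕ`. -/
abbrev G2 : Type := ℕ → ZMod 2

/-- Normalized Haar (probability) measure on `G2`. -/
def muG : Measure G2 :=
  Measure.addHaarMeasure ⟨⟨Set.univ, isCompact_univ⟩, by
    rw [interior_univ]; exact Set.univ_nonempty⟩

/-- Rademacher functions. -/
def rad (k : ℕ) (x : G2) : ℝ := (-1 : ℝ) ^ ((x k).val)

/-- Walsh–Paley functions. -/
def walsh (n : ℕ) (x : G2) : ℝ :=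
  ∏ k ∈ Finset.range n, if n.testBit k then rad k x else 1

/-- Walsh–Dirichlet kernels. -/
def dirichlet (n : ℕ) (x : G2) : ℝ := ∑ k ∈ Finset.range n, walsh k x

/-- The cylinder sets `I_n`. -/
def cyl (n : ℕ) : Set G2 := {x | ∀ i < n, x i = 0}

/-- Walsh–Fourier coefficients. -/
def fhat (f : G2 → ℝ) (k : ℕ) : ℝ := ∫ x, f x * walsh k x ∂muG

/-- Walsh–Fourier partial sums of a function. -/
def funS (f : G2 → ℝ) (n : ℕ) (x : G2) : ℝ :=
  ∑ k ∈ Finset.range n, fhat f k * walsh k x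

/-- Partial sums of the Walsh series of a dyadic martingale given by coefficients `c`. -/
def mS (c : ℕ → ℝ) (n : ℕ) (x : G2) : ℝ := ∑ k ∈ Finset.range n, c k * walsh k x

/-- The martingale maximal function. -/
def mMax (c : ℕ → ℝ) (x : G2) : ℝ≥0∞ := ⨆ n : ℕ, (‖mS c (2 ^ n) x‖₊ : ℝ≥0∞)

/-- The martingale Hardy space quasi-norm `H_p`. -/
def mHp (p : ℝ) (c : ℕ → ℝ) : ℝ≥0∞ := (∫⁻ x, (mMax c x) ^ p ∂muG) ^ (1 / p)

/-- The maximal function of an integrable function. -/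
def funMax (f : G2 → ℝ) (x : G2) : ℝ≥0∞ := ⨆ n : ℕ, (‖funS f (2 ^ n) x‖₊ : ℝ≥0∞)

/-- The Hardy space quasi-norm of an integrable function. -/
def funHp (p : ℝ) (f : G2 → ℝ) : ℝ≥0∞ := (∫⁻ x, (funMax f x) ^ p ∂muG) ^ (1 / p)

/-- Weak `L^p` quasi-norm. -/
def weakLp (p : ℝ) (f : G2 → ℝ) : ℝ≥0∞ :=
  ⨆ t : NNReal, (t : ℝ≥0∞) * (muG {x | (t : ℝ) < |f x|}) ^ (1 / p)


lemma walsh_eq (n M : ℕ) (h : n < 2 ^ M) (x : G2) :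
    walsh n x = ∏ k ∈ Finset.range M, if n.testBit k then rad k x else 1 := by
  rcases le_total n M with hnM | hMn
  · rw [walsh]
    apply Finset.prod_subset (Finset.range_subset_range.2 hnM)
    intro k _ hk
    simp only [Finset.mem_range, not_lt] at hk
    rw [Nat.testBit_lt_two_pow (lt_of_lt_of_le Nat.lt_two_pow_self (Nat.pow_le_pow_right (by norm_num) hk))]
    simp
  · rw [walsh]
    refine (Finset.prod_subset (Finset.range_subset_range.2 hMn) ?_).symm
    intro k _ hk
    simp only [Finset.mem_range, not_lt] at hk
    rw [Nat.testBit_lt_two_pow (lt_of_lt_of_le h (Nat.pow_le_pow_right (by norm_num) hk))]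
    simp

lemma walsh_two_pow_add (m r : ℕ) (h : r < 2 ^ m) (x : G2) :
    walsh (2 ^ m + r) x = rad m x * walsh r x := by
  have h2 : 2 ^ m + r < 2 ^ (m + 1) := by
    rw [pow_succ]; omega
  rw [walsh_eq _ _ h2, Finset.prod_range_succ, walsh_eq r m h]
  have ht : (2 ^ m + r).testBit m = true := by
    rw [Nat.testBit_two_pow_add_eq, Nat.testBit_lt_two_pow h]; rfl
  rw [ht, if_pos rfl, mul_comm]
  congr 1
  apply Finset.prod_congr rfl
  intro k hk
  simp only [Finset.mem_range] at hk
  rw [Nat.testBit_two_pow_add_gt hk]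

lemma abs_walsh_le (n : ℕ) (x : G2) : |walsh n x| ≤ 1 := by
  rw [walsh, Finset.abs_prod]
  apply Finset.prod_le_one (fun k _ => abs_nonneg _)
  intro k _
  split
  · rw [rad, abs_pow, abs_neg, abs_one, one_pow]
  · simp

lemma abs_dirichlet_le (n : ℕ) (x : G2) : |dirichlet n x| ≤ n := by
  rw [dirichlet]
  calc |∑ k ∈ Finset.range n, walsh k x| ≤ ∑ k ∈ Finset.range n, |walsh k x| :=
        Finset.abs_sum_le_sum_abs _ _
    _ ≤ ∑ k ∈ Finset.range n, 1 := Finset.sum_le_sum (fun k _ => abs_walsh_le k x)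
    _ = n := by simp

lemma dirichlet_two_pow_add (m r : ℕ) (h : r ≤ 2 ^ m) (x : G2) :
    dirichlet (2 ^ m + r) x = dirichlet (2 ^ m) x + rad m x * dirichlet r x := by
  rw [dirichlet, Finset.sum_range_add, dirichlet, dirichlet, Finset.mul_sum]
  congr 1
  apply Finset.sum_congr rfl
  intro k hk
  simp only [Finset.mem_range] at hk
  exact walsh_two_pow_add m k (lt_of_lt_of_le hk h) x


lemma rad_eq_one (m : ℕ) (x : G2) (h : x m = 0) : rad m x = 1 := by
  rw [rad, h]; norm_num [ZMod.val]; rfl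

lemma rad_eq_neg_one (m : ℕ) (x : G2) (h : x m ≠ 0) : rad m x = -1 := by
  have h1 : x m = 1 := by
    revert h; generalize x m = a; revert a; decide
  rw [rad, h1]; norm_num [ZMod.val]; exact pow_one _

lemma cyl_antitone {m n : ℕ} (h : m ≤ n) : cyl n ⊆ cyl m := by
  intro x hx i hi; exact hx i (lt_of_lt_of_le hi h)

lemma dirichlet_two_pow (m : ℕ) (x : G2) :
    dirichlet (2 ^ m) x = if x ∈ cyl m then (2 ^ m : ℝ) else 0 := by
  induction m with
  | zero =>
    simp only [pow_zero, dirichlet, Finset.sum_range_one]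
    have : walsh 0 x = 1 := by simp [walsh]
    rw [this, if_pos]; intro i hi; omega
  | succ m ih =>
    have key : dirichlet (2 ^ (m+1)) x
        = dirichlet (2 ^ m) x + rad m x * dirichlet (2 ^ m) x := by
      have : 2 ^ (m+1) = 2 ^ m + 2 ^ m := by ring
      rw [this, dirichlet_two_pow_add m (2^m) le_rfl x]
    rw [key, ih]
    by_cases hc : x ∈ cyl m
    · by_cases hm : x m = 0
      · have hc2 : x ∈ cyl (m+1) := by
          intro i hi
          rcases Nat.lt_succ_iff_lt_or_eq.1 hi with h | h
          · exact hc i h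
          · rw [h]; exact hm
        rw [if_pos hc, if_pos hc2, rad_eq_one m x hm]; ring
      · have hc2 : x ∉ cyl (m+1) := fun h => hm (h m (by omega))
        rw [if_pos hc, if_neg hc2, rad_eq_neg_one m x hm]; ring
    · have hc2 : x ∉ cyl (m+1) := fun h => hc (cyl_antitone (by omega) h)
      rw [if_neg hc, if_neg hc2]; ring

/-- `Qn N = ∑_{l ≤ N} 4^l`. -/
def Qn (N : ℕ) : ℕ := ∑ l ∈ Finset.range (N + 1), 4 ^ l

lemma Qn_zero : Qn 0 = 1 := by simp [Qn]

lemma Qn_succ (N : ℕ) : Qn (N + 1) = 4 ^ (N + 1) + Qn N := by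
  rw [Qn, Finset.sum_range_succ, add_comm]; rfl

lemma two_Qn_le (N : ℕ) : 2 * Qn N ≤ 4 ^ (N + 1) := by
  induction N with
  | zero => simp [Qn_zero]
  | succ N ih =>
    rw [Qn_succ]
    have h4 : 4 ^ (N + 2) = 4 * 4 ^ (N + 1) := by ring
    omega

lemma Qn_lt (N : ℕ) : Qn N < 4 ^ (N + 1) := by
  have := two_Qn_le N
  have : 1 ≤ Qn N := by
    induction N with
    | zero => simp [Qn_zero]
    | succ N ih => rw [Qn_succ]; omega
  omega

lemma four_pow (N : ℕ) : (4 : ℕ) ^ N = 2 ^ (2 * N) := by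
  rw [pow_mul]; norm_num

lemma dirichlet_Qn_succ (N : ℕ) (x : G2) :
    dirichlet (Qn (N + 1)) x
      = dirichlet (2 ^ (2 * (N + 1))) x + rad (2 * (N + 1)) x * dirichlet (Qn N) x := by
  have h1 : Qn (N + 1) = 2 ^ (2 * (N + 1)) + Qn N := by rw [Qn_succ, four_pow]
  rw [h1, dirichlet_two_pow_add]
  rw [← four_pow]
  exact le_of_lt (Qn_lt N)

lemma abs_dirichlet_Qn_ge_self (N : ℕ) (x : G2) (hx : x ∈ cyl (2 * N)) :
    (4 ^ N : ℝ) / 2 ≤ |dirichlet (Qn N) x| := by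
  cases N with
  | zero =>
    have : dirichlet (Qn 0) x = 1 := by
      rw [Qn_zero]; simp [dirichlet, walsh]
    rw [this]; norm_num
  | succ N =>
    rw [dirichlet_Qn_succ]
    have hD : dirichlet (2 ^ (2 * (N + 1))) x = (2 : ℝ) ^ (2 * (N + 1)) := by
      rw [dirichlet_two_pow, if_pos hx]
    rw [hD]
    have habs : |rad (2 * (N + 1)) x * dirichlet (Qn N) x| ≤ (Qn N : ℝ) := by
      rw [abs_mul]
      have h1 : |rad (2 * (N + 1)) x| = 1 := by
        rw [rad, abs_pow, abs_neg, abs_one, one_pow]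
      rw [h1, one_mul]
      exact abs_dirichlet_le _ _
    have h2 : (2 : ℝ) ^ (2 * (N + 1)) = (4 : ℝ) ^ (N + 1) := by
      rw [pow_mul]; norm_num
    have h3 : (Qn N : ℝ) ≤ (4 : ℝ) ^ (N + 1) / 2 := by
      have := two_Qn_le N
      have h4 : ((2 * Qn N : ℕ) : ℝ) ≤ ((4 ^ (N + 1) : ℕ) : ℝ) := Nat.cast_le.2 this
      push_cast at h4
      linarith
    calc (4 ^ (N+1) : ℝ) / 2 ≤ (4 : ℝ) ^ (N + 1) - (Qn N : ℝ) := by linarith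
      _ ≤ |(2:ℝ) ^ (2 * (N + 1)) + rad (2 * (N + 1)) x * dirichlet (Qn N) x| := by
          rw [h2]
          set t := rad (2 * (N + 1)) x * dirichlet (Qn N) x with ht
          have habs' : |t| ≤ (4 : ℝ) ^ (N + 1) / 2 := le_trans habs h3
          rw [abs_le] at habs'
          rw [abs_le] at habs
          rw [abs_of_nonneg (by linarith [habs'.1] : (0:ℝ) ≤ 4 ^ (N + 1) + t)]
          linarith [habs.1]

lemma abs_dirichlet_Qn_ge (N j : ℕ) (hj : j ≤ N) (x : G2)
    (hx1 : x ∈ cyl (2 * j)) (hx2 : x ∉ cyl (2 * j + 2)) :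
    (4 ^ j : ℝ) / 2 ≤ |dirichlet (Qn N) x| := by
  induction N with
  | zero =>
    have : j = 0 := by omega
    subst this
    exact abs_dirichlet_Qn_ge_self 0 x hx1
  | succ N ih =>
    rcases Nat.lt_succ_iff_lt_or_eq.1 (Nat.lt_succ_of_le hj) with h | h
    · -- j ≤ N
      have hj' : j ≤ N := by omega
      have hnot : x ∉ cyl (2 * (N + 1)) := by
        intro hc
        exact hx2 (cyl_antitone (by omega) hc)
      rw [dirichlet_Qn_succ]
      have hD : dirichlet (2 ^ (2 * (N + 1))) x = 0 := by
        rw [dirichlet_two_pow, if_neg hnot]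
      rw [hD, zero_add, abs_mul]
      have h1 : |rad (2 * (N + 1)) x| = 1 := by
        rw [rad, abs_pow, abs_neg, abs_one, one_pow]
      rw [h1, one_mul]
      exact ih hj'
    · subst h
      exact abs_dirichlet_Qn_ge_self _ x hx1

instance : muG.IsAddLeftInvariant := Measure.isAddLeftInvariant_addHaarMeasure _

lemma muG_univ : muG Set.univ = 1 := Measure.addHaarMeasure_self

lemma measurableSet_cyl (n : ℕ) : MeasurableSet (cyl n) := by
  have : cyl n = ⋂ i ∈ Set.Iio n, {x : G2 | x i = 0} := by
    ext x; simp [cyl]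
  rw [this]
  apply MeasurableSet.biInter (Set.to_countable _)
  intro i _
  have h0 : MeasurableSet ({0} : Set (ZMod 2)) := trivial
  have : {x : G2 | x i = 0} = (fun x : G2 => x i) ⁻¹' {0} := rfl
  rw [this]
  exact (measurable_pi_apply i) h0

/-- the unit vector `e n`. -/
def ev (n : ℕ) : G2 := fun i => if i = n then 1 else 0

lemma cyl_split (n : ℕ) :
    cyl n = cyl (n + 1) ∪ ((fun x => ev n + x) ⁻¹' cyl (n + 1)) := by
  ext x
  simp only [Set.mem_union, Set.mem_preimage, cyl, Set.mem_setOf_eq]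
  constructor
  · intro hx
    by_cases hn : x n = 0
    · left; intro i hi
      rcases Nat.lt_succ_iff_lt_or_eq.1 hi with h | h
      · exact hx i h
      · rw [h]; exact hn
    · right; intro i hi
      rcases Nat.lt_succ_iff_lt_or_eq.1 hi with h | h
      · have := hx i h
        simp only [ev, Pi.add_apply, this]
        rw [if_neg (by omega)]; ring
      · subst h
        have h1 : x i = 1 := by
          revert hn; generalize x i = a; revert a; decide
        simp only [ev, Pi.add_apply, h1, if_pos rfl]
        decide
  · rintro (hx | hx) i hi
    · exact hx i (by omega)
    · have := hx i (by omega)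
      simp only [ev, Pi.add_apply] at this
      rw [if_neg (by omega)] at this
      simpa using this

lemma cyl_disj (n : ℕ) :
    Disjoint (cyl (n + 1)) ((fun x => ev n + x) ⁻¹' cyl (n + 1)) := by
  rw [Set.disjoint_left]
  intro x hx hx'
  have h1 : x n = 0 := hx n (by omega)
  have h2 : (ev n + x) n = 0 := hx' n (by omega)
  simp only [ev, Pi.add_apply, if_pos rfl, h1] at h2
  exact absurd h2 (by decide)

lemma muG_cyl (n : ℕ) : muG (cyl n) = (2 ^ n : ℝ≥0∞)⁻¹ := by
  induction n with
  | zero =>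
    have : cyl 0 = Set.univ := by ext x; simp [cyl]
    rw [this, muG_univ]; simp
  | succ n ih =>
    have hsplit := cyl_split n
    have hmeas : MeasurableSet ((fun x => ev n + x) ⁻¹' cyl (n + 1)) :=
      (measurableSet_cyl (n + 1)).preimage (measurable_const_add _)
    have hu : muG (cyl n) = muG (cyl (n+1)) + muG ((fun x => ev n + x) ⁻¹' cyl (n + 1)) := by
      rw [hsplit]
      exact measure_union (cyl_disj n) hmeas
    have hinv : muG ((fun x => ev n + x) ⁻¹' cyl (n + 1)) = muG (cyl (n+1)) :=
      measure_preimage_add muG _ _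
    rw [hinv, ih] at hu
    have h2 : (2 : ℝ≥0∞) ^ n ≠ 0 := by positivity
    have h2t : (2 : ℝ≥0∞) ^ n ≠ ⊤ := by
      exact ENNReal.pow_ne_top (by norm_num)
    have hμ : muG (cyl (n+1)) = 2⁻¹ * (2 * muG (cyl (n+1))) := by
      rw [← mul_assoc, ENNReal.inv_mul_cancel (by norm_num) (by norm_num), one_mul]
    rw [pow_succ, ENNReal.mul_inv (Or.inl h2) (Or.inl h2t), hμ, two_mul, ← hu, mul_comm]

lemma measurable_rad (k : ℕ) : Measurable (rad k) := by
  have : rad k = (fun a : ZMod 2 => (-1 : ℝ) ^ a.val) ∘ (fun x : G2 => x k) := rfl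
  rw [this]
  exact Measurable.comp measurable_from_top (measurable_pi_apply k)

lemma measurable_walsh (n : ℕ) : Measurable (walsh n) := by
  have : walsh n = fun x => ∏ k ∈ Finset.range n, if n.testBit k then rad k x else 1 := rfl
  rw [this]
  apply Finset.measurable_prod
  intro k _
  split
  · exact measurable_rad k
  · exact measurable_const

lemma measurable_dirichlet (n : ℕ) : Measurable (dirichlet n) := by
  have : dirichlet n = fun x => ∑ k ∈ Finset.range n, walsh k x := rfl
  rw [this]
  exact Finset.measurable_sum _ (fun k _ => measurable_walsh k)

/-- The annulus `A j`. -/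
def ann (j : ℕ) : Set G2 := cyl (2 * j) \ cyl (2 * j + 2)

lemma measurableSet_ann (j : ℕ) : MeasurableSet (ann j) :=
  (measurableSet_cyl _).diff (measurableSet_cyl _)

lemma muG_ann_ge (j : ℕ) : 2⁻¹ * (2 ^ (2 * j) : ℝ≥0∞)⁻¹ ≤ muG (ann j) := by
  have hsub : cyl (2 * j + 2) ⊆ cyl (2 * j) := cyl_antitone (by omega)
  have hdiff : muG (ann j) = muG (cyl (2 * j)) - muG (cyl (2 * j + 2)) :=
    measure_diff hsub (measurableSet_cyl _).nullMeasurableSet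
      (ne_top_of_le_ne_top (by simp [muG_univ]) (measure_mono (Set.subset_univ _)))
  rw [hdiff, muG_cyl, muG_cyl]
  apply ENNReal.le_sub_of_add_le_right (ENNReal.inv_ne_top.2 (by positivity))
  have h1 : ((2 : ℝ≥0∞) ^ (2 * j + 2))⁻¹ = 4⁻¹ * ((2 : ℝ≥0∞) ^ (2 * j))⁻¹ := by
    rw [pow_add, ENNReal.mul_inv (Or.inl (by positivity)) (Or.inl (ENNReal.pow_ne_top (by norm_num)))]
    norm_num
    rw [mul_comm]
  rw [h1, ← add_mul]
  calc (2⁻¹ + 4⁻¹ : ℝ≥0∞) * ((2:ℝ≥0∞) ^ (2*j))⁻¹ ≤ 1 * ((2:ℝ≥0∞) ^ (2*j))⁻¹ := by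
        apply mul_le_mul_left
        rw [← ENNReal.inv_two_add_inv_two]
        refine add_le_add le_rfl ?_
        rw [ENNReal.inv_le_inv]
        norm_num
    _ = _ := one_mul _

lemma lintegral_abs_dirichlet_Qn (N : ℕ) :
    ((N : ℝ≥0∞) + 1) * 4⁻¹ ≤ ∫⁻ x, (‖dirichlet (Qn N) x‖₊ : ℝ≥0∞) ∂muG := by
  set f : G2 → ℝ≥0∞ := fun x => (‖dirichlet (Qn N) x‖₊ : ℝ≥0∞) with hf
  have hkey : ∀ i j : ℕ, i < j → Disjoint (ann i) (ann j) := by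
    intro i j h
    apply Set.disjoint_left.2
    intro x hxi hxj
    exact hxi.2 (cyl_antitone (by omega) hxj.1)
  have hdisj : Set.PairwiseDisjoint (↑(Finset.range (N + 1))) ann := by
    intro i _ j _ hij
    rcases lt_or_gt_of_ne hij with h | h
    · exact hkey i j h
    · exact (hkey j i h).symm
  have hle : ∑ j ∈ Finset.range (N + 1), ∫⁻ x in ann j, f x ∂muG ≤ ∫⁻ x, f x ∂muG := by
    rw [← lintegral_biUnion_finset hdisj (fun j _ => measurableSet_ann j)]
    exact setLIntegral_le_lintegral _ _
  refine le_trans ?_ hle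
  have hterm : ∀ j ∈ Finset.range (N + 1), (4 : ℝ≥0∞)⁻¹ ≤ ∫⁻ x in ann j, f x ∂muG := by
    intro j hj
    simp only [Finset.mem_range] at hj
    have hpt : ∀ x ∈ ann j, ENNReal.ofReal ((4 : ℝ) ^ j / 2) ≤ f x := by
      intro x hx
      have := abs_dirichlet_Qn_ge N j (by omega) x hx.1 (hx.2)
      rw [hf]
      calc ENNReal.ofReal ((4 : ℝ) ^ j / 2) ≤ ENNReal.ofReal |dirichlet (Qn N) x| :=
            ENNReal.ofReal_le_ofReal this
        _ = (‖dirichlet (Qn N) x‖₊ : ℝ≥0∞) := by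
            rw [← Real.norm_eq_abs, ofReal_norm_eq_enorm]; rfl
    have hconst : ENNReal.ofReal ((4 : ℝ) ^ j / 2) * muG (ann j)
        ≤ ∫⁻ x in ann j, f x ∂muG := by
      rw [← setLIntegral_const (ann j) _]
      apply setLIntegral_mono (measurable_dirichlet _).nnnorm.coe_nnreal_ennreal
      exact hpt
    refine le_trans ?_ hconst
    have h1 : ENNReal.ofReal ((4 : ℝ) ^ j / 2) = (2 : ℝ≥0∞) ^ (2 * j) * 2⁻¹ := by
      rw [ENNReal.ofReal_div_of_pos (by norm_num), ENNReal.ofReal_pow (by norm_num),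
        div_eq_mul_inv]
      norm_num
      rw [(by norm_num : ((4:ℝ≥0∞)) = 2 ^ 2), ← pow_mul]
    have hcancel : (2:ℝ≥0∞) ^ (2*j) * ((2:ℝ≥0∞) ^ (2*j))⁻¹ = 1 :=
      ENNReal.mul_inv_cancel (by positivity) (ENNReal.pow_ne_top (by norm_num))
    calc (4 : ℝ≥0∞)⁻¹ = ((2:ℝ≥0∞) ^ (2*j) * 2⁻¹) * (2⁻¹ * ((2:ℝ≥0∞) ^ (2*j))⁻¹) := by
          have : ((2:ℝ≥0∞) ^ (2*j) * 2⁻¹) * (2⁻¹ * ((2:ℝ≥0∞) ^ (2*j))⁻¹)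
              = ((2:ℝ≥0∞) ^ (2*j) * ((2:ℝ≥0∞) ^ (2*j))⁻¹) * (2⁻¹ * 2⁻¹) := by ring
          rw [this, hcancel, one_mul, ← ENNReal.mul_inv (Or.inl (by norm_num)) (Or.inl (by norm_num))]
          norm_num
      _ ≤ _ := mul_le_mul' (le_of_eq h1.symm) (muG_ann_ge j)
  calc ((N : ℝ≥0∞) + 1) * 4⁻¹ = ∑ j ∈ Finset.range (N + 1), (4:ℝ≥0∞)⁻¹ := by
        rw [Finset.sum_const, Finset.card_range, nsmul_eq_mul]
        push_cast
        ring
    _ ≤ _ := Finset.sum_le_sum hterm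


/-- coefficients of the witness function at scale `N`. -/
def cf (N : ℕ) : ℕ → ℝ := fun k => if 4 ^ N ≤ k ∧ k < 2 * 4 ^ N then 1 else 0

lemma mS_cf_eq (N t : ℕ) (x : G2) :
    mS (cf N) t x = ∑ k ∈ Finset.Ico (4 ^ N) (min t (2 * 4 ^ N)), walsh k x := by
  have hfilter : ∑ k ∈ Finset.range t, cf N k * walsh k x
      = ∑ k ∈ (Finset.range t).filter (fun k => 4 ^ N ≤ k ∧ k < 2 * 4 ^ N), walsh k x := by
    rw [Finset.sum_filter]
    apply Finset.sum_congr rfl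
    intro k _
    rw [cf]
    split <;> simp
  rw [mS, hfilter]
  congr 1
  ext k
  simp only [Finset.mem_filter, Finset.mem_range, Finset.mem_Ico, lt_min_iff]
  omega

lemma mS_cf (N t : ℕ) (x : G2) (h2 : t ≤ 2 * 4 ^ N) :
    mS (cf N) t x = rad (2 * N) x * dirichlet (t - 4 ^ N) x := by
  rw [mS_cf_eq, min_eq_left h2]
  rcases le_or_gt t (4 ^ N) with h | h
  · rw [Finset.Ico_eq_empty (by omega), Finset.sum_empty]
    have : t - 4 ^ N = 0 := by omega
    rw [this]
    simp [dirichlet]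
  · rw [Finset.sum_Ico_eq_sum_range]
    have hrw : ∀ k ∈ Finset.range (t - 4 ^ N), walsh (4 ^ N + k) x = rad (2 * N) x * walsh k x := by
      intro k hk
      simp only [Finset.mem_range] at hk
      have hk4 : k < 4 ^ N := by omega
      have h4 : (4 : ℕ) ^ N = 2 ^ (2 * N) := four_pow N
      rw [h4] at hk4 ⊢
      exact walsh_two_pow_add (2 * N) k hk4 x
    rw [Finset.sum_congr rfl hrw, ← Finset.mul_sum, dirichlet]

lemma Qn_le_two_mul (N : ℕ) : Qn (N + 1) ≤ 2 * 4 ^ (N + 1) := by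
  rw [Qn_succ]
  have := Qn_lt N
  omega

lemma mS_cf_Qn (N : ℕ) (x : G2) :
    mS (cf (N + 1)) (Qn (N + 1)) x = rad (2 * (N + 1)) x * dirichlet (Qn N) x := by
  rw [mS_cf _ _ _ (Qn_le_two_mul N)]
  congr 2
  rw [Qn_succ]
  omega

lemma nnnorm_rad_mul (m : ℕ) (x : G2) (r : ℝ) : ‖rad m x * r‖₊ = ‖r‖₊ := by
  have h : |rad m x * r| = |r| := by
    rw [abs_mul, rad, abs_pow, abs_neg, abs_one, one_pow, one_mul]
  ext
  simp only [coe_nnnorm, Real.norm_eq_abs]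
  rw [h]


lemma coe_nnnorm_two_pow (m : ℕ) : ((‖(2:ℝ) ^ m‖₊ : ℝ≥0∞)) = 2 ^ m := by
  rw [nnnorm_pow, ENNReal.coe_pow]
  norm_num

lemma mMax_cf (N : ℕ) (x : G2) :
    (⨆ n : ℕ, (‖mS (cf N) (2 ^ n) x‖₊ : ℝ≥0∞))
      = Set.indicator (cyl (2 * N)) (fun _ => ((2 : ℝ≥0∞) ^ (2 * N))) x := by
  have hval : ∀ n : ℕ, mS (cf N) (2 ^ n) x = 0 ∨
      mS (cf N) (2 ^ n) x = rad (2 * N) x * dirichlet (2 ^ (2 * N)) x := by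
    intro n
    rcases le_or_gt (2 ^ n) (4 ^ N) with h | h
    · left
      rw [mS_cf N _ x (by omega)]
      have h0 : 2 ^ n - 4 ^ N = 0 := by omega
      rw [h0]
      simp [dirichlet]
    · right
      have hn : 2 * N + 1 ≤ n := by
        by_contra hc
        push_neg at hc
        have : (2:ℕ) ^ n ≤ 2 ^ (2 * N) := Nat.pow_le_pow_right (by norm_num) (by omega)
        rw [← four_pow] at this
        omega
      have h2 : 2 * 4 ^ N ≤ 2 ^ n := by
        calc 2 * 4 ^ N = 2 ^ (2 * N + 1) := by rw [four_pow]; ring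
          _ ≤ 2 ^ n := Nat.pow_le_pow_right (by norm_num) hn
      rw [mS_cf_eq, min_eq_right h2, ← min_eq_left (le_refl (2 * 4 ^ N)), ← mS_cf_eq,
        mS_cf N _ x le_rfl]
      congr 2
      rw [four_pow]
      omega
  have hD : rad (2 * N) x * dirichlet (2 ^ (2 * N)) x
      = rad (2 * N) x * (if x ∈ cyl (2 * N) then ((2:ℝ) ^ (2 * N)) else 0) := by
    rw [dirichlet_two_pow]
  have htop : ∀ n : ℕ, (‖mS (cf N) (2 ^ n) x‖₊ : ℝ≥0∞)
      ≤ Set.indicator (cyl (2 * N)) (fun _ => ((2 : ℝ≥0∞) ^ (2 * N))) x := by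
    intro n
    rcases hval n with h | h
    · rw [h]; simp
    · rw [h, nnnorm_rad_mul, dirichlet_two_pow]
      by_cases hc : x ∈ cyl (2 * N)
      · rw [if_pos hc, Set.indicator_of_mem hc]
        exact le_of_eq (coe_nnnorm_two_pow _)
      · rw [if_neg hc]; simp
  apply le_antisymm
  · exact iSup_le htop
  · have hat : mS (cf N) (2 ^ (2 * N + 1)) x = rad (2 * N) x * dirichlet (2 ^ (2 * N)) x := by
      have h2 : (2:ℕ) ^ (2 * N + 1) = 2 * 4 ^ N := by rw [four_pow]; ring
      rw [h2, mS_cf N _ x le_rfl]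
      congr 2
      rw [four_pow]
      omega
    by_cases hc : x ∈ cyl (2 * N)
    · rw [Set.indicator_of_mem hc]
      refine le_trans ?_ (le_iSup _ (2 * N + 1))
      rw [hat, nnnorm_rad_mul, dirichlet_two_pow, if_pos hc]
      exact le_of_eq (coe_nnnorm_two_pow _).symm
    · rw [Set.indicator_of_notMem hc]
      simp


lemma mHp_cf (N : ℕ) : mHp 1 (cf N) = 1 := by
  rw [mHp]
  have h1 : ∀ x, (mMax (cf N) x) ^ (1:ℝ) = mMax (cf N) x := fun x => ENNReal.rpow_one _
  simp only [h1]
  have h2 : ∫⁻ x, mMax (cf N) x ∂muG = 1 := by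
    have h3 : ∀ x, mMax (cf N) x
        = Set.indicator (cyl (2 * N)) (fun _ => ((2 : ℝ≥0∞) ^ (2 * N))) x :=
      fun x => mMax_cf N x
    rw [lintegral_congr h3, lintegral_indicator (measurableSet_cyl _) _, setLIntegral_const,
      muG_cyl, ENNReal.mul_inv_cancel (by positivity) (ENNReal.pow_ne_top (by norm_num))]
  rw [h2, ENNReal.one_rpow]

lemma lintegral_mS_cf_Qn (N : ℕ) :
    ((N : ℝ≥0∞) + 1) * 4⁻¹
      ≤ ∫⁻ x, (‖mS (cf (N + 1)) (Qn (N + 1)) x‖₊ : ℝ≥0∞) ∂muG := by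
  have h : ∀ x : G2, (‖mS (cf (N + 1)) (Qn (N + 1)) x‖₊ : ℝ≥0∞)
      = (‖dirichlet (Qn N) x‖₊ : ℝ≥0∞) := by
    intro x
    rw [mS_cf_Qn, nnnorm_rad_mul]
  rw [lintegral_congr h]
  exact lintegral_abs_dirichlet_Qn N

lemma Qn_gt_self (N : ℕ) : N < Qn N := by
  have h1 : (4:ℕ) ^ N ≤ Qn N := by
    rw [Qn]
    exact Finset.single_le_sum (f := fun l => 4 ^ l) (fun i _ => Nat.zero_le _)
      (Finset.self_mem_range_succ N)
  have h2 : N < 2 ^ N := Nat.lt_two_pow_self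
  have h3 : (2:ℕ) ^ N ≤ 4 ^ N := Nat.pow_le_pow_left (by norm_num) N
  omega

lemma freq (φ : ℕ → ℝ)
    (hφ : Filter.atTop.limsup
        (fun n : ℕ => ENNReal.ofReal (Real.log ((n : ℝ) + 2) / φ n)) = ⊤) :
    ∀ (M : ℝ) (n₀ : ℕ), ∃ n, n₀ ≤ n ∧ M ≤ Real.log ((n : ℝ) + 2) / φ n := by
  intro M n₀
  by_contra hc
  push_neg at hc
  have hev : ∀ᶠ n in (atTop : Filter ℕ),
      (fun n : ℕ => ENNReal.ofReal (Real.log ((n : ℝ) + 2) / φ n)) n ≤ ENNReal.ofReal M :=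
    Filter.eventually_atTop.2 ⟨n₀, fun n hn => ENNReal.ofReal_le_ofReal (le_of_lt (hc n hn))⟩
  have hle := Filter.limsup_le_of_le (by isBoundedDefault) hev
  rw [hφ] at hle
  exact (ENNReal.ofReal_ne_top) (top_le_iff.1 hle)

lemma Qn5_ge : 5 ≤ Qn 5 := by norm_num [Qn, Finset.sum_range_succ]

theorem stmt18 (φ : ℕ → ℝ) (hφ1 : ∀ n, 1 ≤ φ n) (hφm : Monotone φ)
    (hφ : Filter.atTop.limsup
        (fun n : ℕ => ENNReal.ofReal (Real.log ((n : ℝ) + 2) / φ n)) = ⊤) :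
    ∃ (g : ℕ → ℕ → ℝ) (qk : ℕ → ℕ),
      (∀ k, mHp 1 (g k) ≤ 1) ∧
      Tendsto (fun k : ℕ =>
          (∫⁻ x, (‖mS (g k) (qk k) x‖₊ : ℝ≥0∞) ∂muG) / ENNReal.ofReal (φ (qk k)))
        atTop (nhds ⊤) := by
  classical
  have hsel : ∀ k : ℕ, ∃ n : ℕ, Qn 5 ≤ n ∧ (k : ℝ) ≤ Real.log ((n : ℝ) + 2) / φ n := by
    intro k
    obtain ⟨n, h1, h2⟩ := freq φ hφ k (Qn 5)
    exact ⟨n, h1, h2⟩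
  choose nk hnk1 hnk2 using hsel
  set Nk : ℕ → ℕ := fun k => Nat.findGreatest (fun N => Qn N ≤ nk k) (nk k) with hNkdef
  refine ⟨fun k => cf (Nk k), fun k => Qn (Nk k), fun k => le_of_eq (mHp_cf (Nk k)), ?_⟩
  apply ENNReal.tendsto_nhds_top
  intro m
  filter_upwards [Filter.eventually_ge_atTop (16 * (m + 1))] with k hk
  -- setup
  have hk16 : 16 ≤ k := by omega
  have hkpos : (0 : ℝ) < k := by positivity
  set n := nk k with hn
  have hQ5n : Qn 5 ≤ n := hnk1 k
  have h1n : 1 ≤ n := le_trans (by omega) (le_trans Qn5_ge hQ5n)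
  have hP0 : Qn 0 ≤ n := by rw [Qn_zero]; omega
  set N := Nk k with hNdef
  have hNle : Qn N ≤ n := Nat.findGreatest_spec (P := fun N => Qn N ≤ nk k) (Nat.zero_le _) hP0
  have hN5 : 5 ≤ N := Nat.le_findGreatest (P := fun N => Qn N ≤ nk k) (le_trans Qn5_ge hQ5n) hQ5n
  have hNlt : N < n := lt_of_lt_of_le (Qn_gt_self N) hNle
  have hNup : n < Qn (N + 1) := by
    by_contra hcon
    push_neg at hcon
    exact Nat.findGreatest_is_greatest (P := fun N => Qn N ≤ nk k) (lt_add_one N) (by omega) hcon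
  obtain ⟨M, hM⟩ : ∃ M, N = M + 1 := ⟨N - 1, by omega⟩
  -- numerator lower bound
  have hnum : ENNReal.ofReal ((N : ℝ) / 4)
      ≤ ∫⁻ x, (‖mS (cf N) (Qn N) x‖₊ : ℝ≥0∞) ∂muG := by
    rw [hM]
    refine le_trans (le_of_eq ?_) (lintegral_mS_cf_Qn M)
    rw [ENNReal.ofReal_div_of_pos (by norm_num)]
    push_cast
    rw [ENNReal.ofReal_add (by positivity) (by norm_num), ENNReal.ofReal_natCast,
      ENNReal.ofReal_one, ENNReal.ofReal_ofNat, div_eq_mul_inv]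
  -- denominator upper bound
  have hNpos : (0 : ℝ) < (N : ℝ) := by
    have : (0:ℕ) < N := by omega
    exact_mod_cast this
  have hlog : Real.log ((n : ℝ) + 2) ≤ 4 * (N : ℝ) := by
    have hle42 : (n : ℕ) + 2 ≤ 4 ^ (N + 2) := by
      have h2' : Qn (N + 1) < 4 ^ (N + 2) := Qn_lt (N + 1)
      omega
    have hle42' : ((n : ℝ) + 2) ≤ (4 : ℝ) ^ (N + 2) := by
      have := (Nat.cast_le (α := ℝ)).2 hle42
      push_cast at this
      linarith
    have hlog1 : Real.log ((n : ℝ) + 2) ≤ Real.log ((4 : ℝ) ^ (N + 2)) :=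
      Real.log_le_log (by positivity) hle42'
    rw [Real.log_pow] at hlog1
    have hlog4 : Real.log 4 ≤ 1.4 := by
      have h24 : (4 : ℝ) = 2 ^ 2 := by norm_num
      rw [h24, Real.log_pow]
      have := Real.log_two_lt_d9
      push_cast
      linarith
    have hN2 : ((N : ℝ) + 2) ≤ 2 * N := by
      have : (5 : ℝ) ≤ N := by exact_mod_cast hN5
      linarith
    calc Real.log ((n : ℝ) + 2) ≤ ((N : ℝ) + 2) * Real.log 4 := by
          push_cast at hlog1 ⊢
          linarith
      _ ≤ (2 * N) * 1.4 := by
          apply mul_le_mul hN2 hlog4 (Real.log_nonneg (by norm_num)) (by linarith)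
      _ ≤ 4 * N := by linarith
  have hφQ : φ (Qn N) ≤ 4 * (N : ℝ) / k := by
    have h1 : φ (Qn N) ≤ φ n := hφm hNle
    have hφpos : (0 : ℝ) < φ n := lt_of_lt_of_le one_pos (hφ1 n)
    have h2 : (k : ℝ) * φ n ≤ Real.log ((n : ℝ) + 2) := by
      have h3 := hnk2 k
      rw [le_div_iff₀ hφpos] at h3
      linarith
    rw [le_div_iff₀ hkpos]
    have h4 : φ (Qn N) * k ≤ φ n * k := mul_le_mul_of_nonneg_right h1 (le_of_lt hkpos)
    nlinarith
  -- final chain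
  have hden_le : ENNReal.ofReal (φ (Qn N)) ≤ ENNReal.ofReal (4 * (N : ℝ) / k) :=
    ENNReal.ofReal_le_ofReal hφQ
  have hdiv : ENNReal.ofReal ((N : ℝ) / 4) / ENNReal.ofReal (4 * (N : ℝ) / k)
      ≤ (∫⁻ x, (‖mS (cf N) (Qn N) x‖₊ : ℝ≥0∞) ∂muG) / ENNReal.ofReal (φ (Qn N)) :=
    ENNReal.div_le_div hnum hden_le
  have hpos : (0 : ℝ) < 4 * (N : ℝ) / k := by positivity
  have heq : ENNReal.ofReal ((N : ℝ) / 4) / ENNReal.ofReal (4 * (N : ℝ) / k)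
      = ENNReal.ofReal (((N : ℝ) / 4) / (4 * (N : ℝ) / k)) :=
    (ENNReal.ofReal_div_of_pos hpos).symm
  have harith : ((N : ℝ) / 4) / (4 * (N : ℝ) / k) = (k : ℝ) / 16 := by
    field_simp
    ring
  have hm : (m : ℝ≥0∞) < ENNReal.ofReal ((k : ℝ) / 16) := by
    rw [← ENNReal.ofReal_natCast m]
    rw [ENNReal.ofReal_lt_ofReal_iff (by positivity)]
    have hk' : ((16 * (m + 1) : ℕ) : ℝ) ≤ (k : ℝ) := Nat.cast_le.2 hk
    push_cast at hk'
    linarith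
  calc (m : ℝ≥0∞) < ENNReal.ofReal ((k : ℝ) / 16) := hm
    _ = ENNReal.ofReal ((N : ℝ) / 4) / ENNReal.ofReal (4 * (N : ℝ) / k) := by
        rw [heq, harith]
    _ ≤ _ := hdiv

end
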